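/- There exists a positive integer N such that for every m ≥ N and every integer j with j > 3m/4, the number S(j,m) of permutations π ∈ Sym(m) with exactly j cycles satisfies S(j,m) < (m!)^{0.41}. -/

import Mathlib

open Equiv MulAction

/-- The number of conjugacy classes of a group. -/
noncomputable def kclass (G : Type*) [Group G] : ℕ := Nat.card (ConjClasses G)

/-- The coordinate-permuting action of `Perm ι` on `ι → X`, as automorphisms. -/
def permAut (ι X : Type*) [Group X] : Perm ι →* MulAut (ι → X) where
  toFun e :=
    { toFun := fun f => f ∘ e.symm
      invFun := fun f => f ∘ e
      left_inv := fun f => by funext i; simp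
      right_inv := fun f => by funext i; simp
      map_mul' := fun f g => rfl }
  map_one' := by ext f; rfl
  map_mul' := fun e₁ e₂ => by ext f; rfl

/-- The wreath product `X ≀ H` of a group `X` with a permutation group `H ≤ Perm ι`,
i.e. the semidirect product `X^ι ⋊ H` where `H` permutes the direct factors of `X^ι`. -/
abbrev Wreath (X : Type*) [Group X] {ι : Type*} (H : Subgroup (Perm ι)) :=
  SemidirectProduct (ι → X) H ((permAut ι X).comp H.subtype)

/-- A group acting on `Ω` acts on the functions `Ω → S` by permuting coordinates. -/
instance funMulAction (G Ω S : Type*) [Group G] [MulAction G Ω] : MulAction G (Ω → S) where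
  smul g f := fun ω => f (g⁻¹ • ω)
  one_smul f := funext fun ω => by
    show f ((1 : G)⁻¹ • ω) = f ω
    rw [inv_one, one_smul]
  mul_smul g h f := funext fun ω => by
    show f ((g * h)⁻¹ • ω) = f (h⁻¹ • g⁻¹ • ω)
    rw [mul_inv_rev, mul_smul]

/-- `σ(h)`: the number of cycles of a permutation `h` in its disjoint cycle decomposition,
with fixed points counted as cycles of length 1; equivalently, the number of orbits of
the cyclic group generated by `h`. -/
noncomputable def cycleCount {ι : Type*} (h : Perm ι) : ℕ :=
  Nat.card (orbitRel.Quotient (Subgroup.zpowers h) ι)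

/-- `n(G, α)`: the number of orbits of a group action. -/
noncomputable def orbitCount (G : Type*) [Group G] (α : Type*) [MulAction G α] : ℕ :=
  Nat.card (orbitRel.Quotient G α)

section Aux

variable {α : Type*} [Fintype α] [LinearOrder α]

/-- `x` is the minimum of its cycle under `π`. -/
def pmin (π : Perm α) (x : α) : Prop := ∀ n : ℕ, x ≤ (π ^ n) x

lemma pow_apply_pow (π : Perm α) (x : α) (a b : ℕ) :
    (π ^ a) ((π ^ b) x) = (π ^ (a + b)) x := by
  rw [pow_add, Equiv.Perm.mul_apply]

lemma exists_ret (π : Perm α) (x : α) (n : ℕ) : ∃ l : ℕ, (π ^ l) ((π ^ n) x) = x := by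
  refine ⟨n * (orderOf π - 1), ?_⟩
  rw [pow_apply_pow]
  have h1 : 1 ≤ orderOf π := orderOf_pos π
  have h2 : n * (orderOf π - 1) + n = orderOf π * n := by
    obtain ⟨d, hd⟩ := Nat.exists_eq_add_of_le h1
    rw [hd]
    have : 1 + d - 1 = d := by omega
    rw [this]; ring
  rw [h2, pow_mul, pow_orderOf_eq_one, one_pow, Equiv.Perm.one_apply]

lemma exists_pmin (π : Perm α) (x : α) : ∃ n : ℕ, pmin π ((π ^ n) x) := by
  have hord : 0 < orderOf π := orderOf_pos π
  set T : Finset α := (Finset.range (orderOf π)).image (fun n => (π ^ n) x) with hT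
  have hne : T.Nonempty := ⟨(π ^ 0) x, Finset.mem_image_of_mem _ (Finset.mem_range.mpr hord)⟩
  obtain ⟨n, -, hn⟩ := Finset.mem_image.mp (T.min'_mem hne)
  refine ⟨n, fun l => ?_⟩
  have hmem : (π ^ l) ((π ^ n) x) ∈ T := by
    rw [pow_apply_pow, ← pow_mod_orderOf]
    exact Finset.mem_image_of_mem _ (Finset.mem_range.mpr (Nat.mod_lt _ hord))
  exact hn.trans_le (T.min'_le _ hmem)

lemma pmin_unique {π : Perm α} {x y : α} {n : ℕ} (hx : pmin π x) (hy : pmin π y)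
    (h : (π ^ n) x = y) : x = y := by
  obtain ⟨l, hl⟩ := exists_ret π x n
  rw [h] at hl
  exact le_antisymm (h ▸ hx n) ((hy l).trans (le_of_eq hl))

lemma pmin_of_fixed {π : Perm α} {x : α} (h : π x = x) : pmin π x := by
  intro n
  have : (π ^ n) x = x := by
    induction n with
    | zero => simp
    | succ k ih => rw [pow_succ, Equiv.Perm.mul_apply, h, ih]
  exact le_of_eq this.symm

lemma orbit_pow {π : Perm α} {x y : α} (h : y ∈ MulAction.orbit (Subgroup.zpowers π) x) :
    ∃ n : ℕ, (π ^ n) x = y := by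
  obtain ⟨⟨g, hg⟩, hgx⟩ := h
  obtain ⟨k, rfl⟩ := Subgroup.mem_zpowers_iff.mp hg
  have hord : 0 < orderOf π := orderOf_pos π
  refine ⟨(k % (orderOf π : ℤ)).toNat, ?_⟩
  have h1 : ((k % (orderOf π : ℤ)).toNat : ℤ) = k % (orderOf π : ℤ) :=
    Int.toNat_of_nonneg (Int.emod_nonneg k (by exact_mod_cast hord.ne'))
  have h2 : π ^ ((k % (orderOf π : ℤ)).toNat) = π ^ k := by
    rw [← zpow_natCast, h1, zpow_mod_orderOf]
  rw [h2]
  exact hgx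

lemma mem_orbit_of_pow {π : Perm α} {x y : α} {n : ℕ} (h : (π ^ n) x = y) :
    y ∈ MulAction.orbit (Subgroup.zpowers π) x :=
  ⟨⟨π ^ n, Subgroup.npow_mem_zpowers π n⟩, h⟩

noncomputable def mrep (π : Perm α) (x : α) : α := (π ^ (exists_pmin π x).choose) x

lemma pmin_mrep (π : Perm α) (x : α) : pmin π (mrep π x) := (exists_pmin π x).choose_spec

lemma mrep_eq_self {π : Perm α} {x : α} (h : pmin π x) : mrep π x = x :=
  (pmin_unique h (pmin_mrep π x) rfl).symm

lemma mrep_eq_of_pow {π : Perm α} {x y : α} (n : ℕ) (h : (π ^ n) x = y) :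
    mrep π x = mrep π y := by
  set a := (exists_pmin π x).choose with ha
  set b := (exists_pmin π y).choose with hb
  obtain ⟨c, hc⟩ := exists_ret π x a
  rw [pow_apply_pow] at hc
  have key : (π ^ (b + n + c)) (mrep π x) = mrep π y := by
    show (π ^ (b + n + c)) ((π ^ a) x) = (π ^ b) y
    rw [pow_apply_pow, show b + n + c + a = (b + n) + (c + a) from by ring, ← pow_apply_pow, hc,
      ← pow_apply_pow, h]
  exact pmin_unique (pmin_mrep π x) (pmin_mrep π y) key

lemma cycleCount_eq_card_pmin (π : Perm α) :
    cycleCount π = Nat.card {x : α // pmin π x} := by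
  apply Nat.card_congr
  have wd : ∀ a b : α, (MulAction.orbitRel (Subgroup.zpowers π) α).r a b →
      (⟨mrep π a, pmin_mrep π a⟩ : {x : α // pmin π x}) = ⟨mrep π b, pmin_mrep π b⟩ := by
    intro a b hab
    obtain ⟨n, hn⟩ := orbit_pow hab
    exact Subtype.ext (mrep_eq_of_pow n hn).symm
  refine Equiv.ofBijective
    (fun q => Quotient.liftOn' q (fun x => (⟨mrep π x, pmin_mrep π x⟩ : {x : α // pmin π x})) wd)
    ⟨?_, ?_⟩
  · intro q1 q2
    refine Quotient.inductionOn₂' q1 q2 (fun a b h => ?_)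
    have hm : mrep π a = mrep π b := congrArg Subtype.val h
    apply Quotient.sound'
    have h1 : a ∈ MulAction.orbit (Subgroup.zpowers π) (mrep π a) := by
      obtain ⟨c, hc⟩ := exists_ret π a (exists_pmin π a).choose
      exact mem_orbit_of_pow hc
    have h2 : mrep π b ∈ MulAction.orbit (Subgroup.zpowers π) b :=
      mem_orbit_of_pow rfl
    rw [hm] at h1
    show a ∈ MulAction.orbit (Subgroup.zpowers π) b
    rwa [← MulAction.orbit_eq_iff.mpr h2]
  · rintro ⟨x, hx⟩
    exact ⟨Quotient.mk'' x, Subtype.ext (mrep_eq_self hx)⟩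

open scoped Classical in
/-- `π` with its cycle minima frozen. -/
noncomputable def gmap (π : Perm α) : α → α := fun x => if pmin π x then x else π x

lemma gmap_eq_self_iff {π : Perm α} {x : α} : gmap π x = x ↔ pmin π x := by
  classical
  constructor
  · intro h
    by_cases hx : pmin π x
    · exact hx
    · rw [gmap, if_neg hx] at h
      exact pmin_of_fixed h
  · intro h
    rw [gmap, if_pos h]

lemma pmin_iff_of_gmap_eq {π π' : Perm α} (hg : gmap π = gmap π') (x : α) :
    pmin π x ↔ pmin π' x := by
  rw [← gmap_eq_self_iff, ← gmap_eq_self_iff, hg]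

lemma apply_eq_of_gmap_eq {π π' : Perm α} (hg : gmap π = gmap π') {x : α}
    (hx : ¬ pmin π x) : π x = π' x := by
  classical
  have hx' : ¬ pmin π' x := fun h => hx ((pmin_iff_of_gmap_eq hg x).mpr h)
  have := congrFun hg x
  rwa [gmap, gmap, if_neg hx, if_neg hx'] at this

lemma iter_eq_of_gmap_eq {π π' : Perm α} (hg : gmap π = gmap π') (b : α) :
    ∀ i : ℕ, (∀ l < i, ¬ pmin π ((π ^ l) b)) → (π ^ i) b = (π' ^ i) b := by
  intro i
  induction i with
  | zero => intro _; rfl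
  | succ n ih =>
    intro hl
    have h1 : (π ^ n) b = (π' ^ n) b := ih (fun l hln => hl l (hln.trans (Nat.lt_succ_self n)))
    have h2 : ¬ pmin π ((π ^ n) b) := hl n (Nat.lt_succ_self n)
    rw [pow_succ', pow_succ', Equiv.Perm.mul_apply, Equiv.Perm.mul_apply, ← h1]
    exact apply_eq_of_gmap_eq hg h2

lemma gmap_injective : Function.Injective (gmap (α := α)) := by
  have key : ∀ π π' : Perm α, gmap π = gmap π' → ∀ a, pmin π a → π' a ≠ a → π a = π' a := by
    intro π π' hg a ha hne
    classical
    have ha' : pmin π' a := (pmin_iff_of_gmap_eq hg a).mp ha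
    set b := π' a with hbdef
    have hb' : ¬ pmin π' b := by
      intro hb
      have h0 : a = b := pmin_unique ha' hb (by rw [pow_one, hbdef])
      exact hne h0.symm
    have hb : ¬ pmin π b := fun h => hb' ((pmin_iff_of_gmap_eq hg b).mp h)
    have hc : pmin π (π⁻¹ b) := by
      by_contra hcn
      have h1 : π (π⁻¹ b) = π' (π⁻¹ b) := apply_eq_of_gmap_eq hg hcn
      rw [show π (π⁻¹ b) = b from π.apply_symm_apply b] at h1
      have h2 : π⁻¹ b = a := π'.injective (by rw [← h1, hbdef])
      rw [h2] at hcn; exact hcn ha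
    have hex := exists_pmin π b
    set n := Nat.find hex with hn
    have ho : pmin π ((π ^ n) b) := Nat.find_spec hex
    have hiter : (π ^ n) b = (π' ^ n) b :=
      iter_eq_of_gmap_eq hg b n (fun l hl => Nat.find_min hex hl)
    have ho' : pmin π' ((π' ^ n) b) := by
      rw [← hiter]; exact (pmin_iff_of_gmap_eq hg _).mp ho
    have e1 : π⁻¹ b = (π ^ n) b := by
      apply pmin_unique hc ho (n := n + 1)
      rw [pow_succ, Equiv.Perm.mul_apply, show π (π⁻¹ b) = b from π.apply_symm_apply b]
    have e2 : a = (π' ^ n) b := by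
      apply pmin_unique ha' ho' (n := n + 1)
      rw [pow_succ, Equiv.Perm.mul_apply, ← hbdef]
    have hfin : π⁻¹ b = a := by rw [e1, hiter, ← e2]
    rw [← hfin, show π (π⁻¹ b) = b from π.apply_symm_apply b]
  intro π π' hg
  ext x
  by_cases hx : pmin π x
  · by_cases h' : π' x = x
    · by_cases h0 : π x = x
      · rw [h0, h']
      · have h3 := key π' π hg.symm x ((pmin_iff_of_gmap_eq hg x).mp hx) h0
        rw [← h3, h']
    · exact key π π' hg x hx h'
  · exact apply_eq_of_gmap_eq hg hx

end Aux

lemma count_le (m j : ℕ) (hm : 0 < m) (hj : j ≤ m) :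
    Nat.card {π : Perm (Fin m) // cycleCount π = j} ≤ 2 ^ m * m ^ (m - j) := by
  classical
  haveI : Inhabited (Fin m) := ⟨⟨0, hm⟩⟩
  set k := m - j with hk
  have key : ∀ π : Perm (Fin m), cycleCount π = j →
      (Finset.univ.filter (fun x => ¬ pmin π x)).card = k := by
    intro π h
    have h1 : (Finset.univ.filter (fun x => pmin π x)).card = j := by
      rw [← h, cycleCount_eq_card_pmin, Nat.card_eq_fintype_card, Fintype.card_subtype]
    have h2 := Finset.card_filter_add_card_filter_not
      (s := (Finset.univ : Finset (Fin m))) (p := fun x => pmin π x)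
    simp only [Finset.card_univ, Fintype.card_fin] at h2
    omega
  set Ψ : {π : Perm (Fin m) // cycleCount π = j} → Finset (Fin m) × (Fin k → Fin m) :=
    fun p => ⟨Finset.univ.filter (fun x => ¬ pmin p.1 x),
      fun i => p.1 (((Finset.univ.filter (fun x => ¬ pmin p.1 x)).sort (· ≤ ·)).getD i default)⟩
    with hΨ
  have hinj : Function.Injective Ψ := by
    rintro ⟨π, h⟩ ⟨π', h'⟩ he
    have e1 : (Finset.univ.filter (fun x => ¬ pmin π x))
        = (Finset.univ.filter (fun x => ¬ pmin π' x)) := congrArg Prod.fst he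
    have e2 : (fun i : Fin k =>
          π (((Finset.univ.filter (fun x => ¬ pmin π x)).sort (· ≤ ·)).getD i default))
        = (fun i : Fin k =>
          π' (((Finset.univ.filter (fun x => ¬ pmin π' x)).sort (· ≤ ·)).getD i default)) :=
      congrArg Prod.snd he
    apply Subtype.ext
    apply gmap_injective
    funext x
    by_cases hx : pmin π x
    · have hx' : pmin π' x := by
        by_contra hh
        have hmm : x ∈ Finset.univ.filter (fun x => ¬ pmin π' x) := by simp [hh]
        rw [← e1] at hmm
        simp [hx] at hmm
      simp [gmap, hx, hx']
    · have hxS : x ∈ Finset.univ.filter (fun x => ¬ pmin π x) := by simp [hx]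
      have hx' : ¬ pmin π' x := by
        have hmm := e1 ▸ hxS
        simpa using (Finset.mem_filter.mp hmm).2
      have hmem : x ∈ (Finset.univ.filter (fun x => ¬ pmin π x)).sort (· ≤ ·) :=
        (Finset.mem_sort _).mpr hxS
      obtain ⟨i, hi, hix⟩ := List.mem_iff_getElem.mp hmem
      have hlen : ((Finset.univ.filter (fun x => ¬ pmin π x)).sort (· ≤ ·)).length = k := by
        rw [Finset.length_sort]; exact key π h
      have hik : i < k := hlen ▸ hi
      have h3 := congrFun e2 ⟨i, hik⟩
      simp only [← e1] at h3
      rw [List.getD_eq_getElem _ _ (by rw [hlen]; exact hik)] at h3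
      simp only [hix] at h3
      simp [gmap, hx, hx', h3]
  calc Nat.card {π : Perm (Fin m) // cycleCount π = j}
      ≤ Nat.card (Finset (Fin m) × (Fin k → Fin m)) := Nat.card_le_card_of_injective Ψ hinj
    _ = 2 ^ m * m ^ k := by
        rw [Nat.card_eq_fintype_card, Fintype.card_prod, Fintype.card_finset, Fintype.card_fin,
          Fintype.card_fun, Fintype.card_fin, Fintype.card_fin]

lemma cycleCount_le {m : ℕ} (π : Perm (Fin m)) : cycleCount π ≤ m := by
  have hs : Function.Surjective
      (Quotient.mk'' : Fin m → orbitRel.Quotient (Subgroup.zpowers π) (Fin m)) :=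
    fun q => Quotient.inductionOn' q (fun x => ⟨x, rfl⟩)
  have := Nat.card_le_card_of_surjective _ hs
  simpa [cycleCount] using this

lemma pow_le_exp_mul_factorial (n : ℕ) : (n : ℝ) ^ n ≤ Real.exp n * n.factorial := by
  induction n with
  | zero => simp
  | succ n ih =>
    have hstep : ((n : ℝ) + 1) ^ n ≤ Real.exp 1 * (n : ℝ) ^ n := by
      rcases Nat.eq_zero_or_pos n with h0 | hpos
      · subst h0
        simpa using Real.one_le_exp (by norm_num)
      · have hn : (0:ℝ) < n := by exact_mod_cast hpos
        have h1 : (n : ℝ) + 1 ≤ n * Real.exp (1 / n) := by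
          have h2 := Real.add_one_le_exp (1 / (n:ℝ))
          have h3 : (n:ℝ) * (1/n + 1) ≤ n * Real.exp (1/n) :=
            mul_le_mul_of_nonneg_left h2 hn.le
          calc (n:ℝ) + 1 = n * (1/n + 1) := by field_simp; ring
            _ ≤ n * Real.exp (1/n) := h3
        calc ((n:ℝ)+1)^n ≤ ((n:ℝ) * Real.exp (1/n))^n := pow_le_pow_left₀ (by positivity) h1 n
          _ = (n:ℝ)^n * (Real.exp (1/n))^n := mul_pow _ _ n
          _ = (n:ℝ)^n * Real.exp 1 := by
              rw [← Real.exp_nat_mul]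
              congr 1
              field_simp
          _ = Real.exp 1 * (n:ℝ)^n := mul_comm _ _
    have hf : (0:ℝ) ≤ (n.factorial : ℝ) := by positivity
    calc ((n+1 : ℕ) : ℝ) ^ (n+1) = ((n:ℝ)+1) * ((n:ℝ)+1)^n := by push_cast; ring
      _ ≤ ((n:ℝ)+1) * (Real.exp 1 * (n:ℝ)^n) :=
          mul_le_mul_of_nonneg_left hstep (by positivity)
      _ ≤ ((n:ℝ)+1) * (Real.exp 1 * (Real.exp n * n.factorial)) := by
          have := mul_le_mul_of_nonneg_left ih (Real.exp_pos 1).le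
          exact mul_le_mul_of_nonneg_left this (by positivity)
      _ = (Real.exp 1 * Real.exp n) * (((n:ℝ)+1) * n.factorial) := by ring
      _ = Real.exp ((n+1 : ℕ) : ℝ) * ((n+1).factorial : ℝ) := by
          rw [← Real.exp_add]
          push_cast [Nat.factorial_succ]
          ring_nf

lemma log_factorial_lb (m : ℕ) (hm : 0 < m) :
    (m:ℝ) * Real.log m - m ≤ Real.log (m.factorial) := by
  have h := pow_le_exp_mul_factorial m
  have hmp : (0:ℝ) < (m:ℝ) := by exact_mod_cast hm
  have hlog := Real.log_le_log (by positivity) h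
  rw [Real.log_pow, Real.log_mul (Real.exp_ne_zero _)
    (by exact_mod_cast m.factorial_pos.ne'), Real.log_exp] at hlog
  linarith

/-- There is `N` such that for all `m ≥ N` and `j > 3m/4`, the number of permutations in
`Sym(m)` with exactly `j` cycles is less than `(m!)^{0.41}`. -/
theorem statement12 :
    ∃ N : ℕ, 0 < N ∧ ∀ m : ℕ, N ≤ m → ∀ j : ℕ, 3 * (m : ℝ) / 4 < (j : ℝ) →
      (Nat.card {π : Perm (Fin m) // cycleCount π = j} : ℝ) <
        (m.factorial : ℝ) ^ (0.41 : ℝ) := by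
  refine ⟨100000, by norm_num, ?_⟩
  intro m hm j hj
  have hm1 : (100000:ℝ) ≤ (m:ℝ) := by exact_mod_cast hm
  have hmpos : 0 < m := by omega
  have hmr : (0:ℝ) < (m:ℝ) := by exact_mod_cast hmpos
  have hfacpos : (0:ℝ) < (m.factorial : ℝ) := by exact_mod_cast m.factorial_pos
  have hrpos : (0:ℝ) < (m.factorial : ℝ) ^ (0.41 : ℝ) := Real.rpow_pos_of_pos hfacpos _
  by_cases hjm : j ≤ m
  swap
  · have : IsEmpty {π : Perm (Fin m) // cycleCount π = j} :=
      ⟨fun p => hjm (p.2 ▸ cycleCount_le p.1)⟩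
    rw [Nat.card_of_isEmpty]
    simpa using hrpos
  · set k := m - j with hk
    have hcard := count_le m j hmpos hjm
    have hcast : (Nat.card {π : Perm (Fin m) // cycleCount π = j} : ℝ)
        ≤ (2:ℝ)^m * (m:ℝ)^k := by exact_mod_cast hcard
    refine lt_of_le_of_lt hcast ?_
    have hkr : (k:ℝ) ≤ (m:ℝ)/4 := by
      have h1 : (k:ℝ) = (m:ℝ) - (j:ℝ) := by
        rw [hk, Nat.cast_sub hjm]
      rw [h1]; linarith
    have hlogm : (10:ℝ) ≤ Real.log m := by
      rw [Real.le_log_iff_exp_le hmr]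
      calc Real.exp 10 = Real.exp 1 ^ (10:ℕ) := by
            rw [← Real.exp_nat_mul]; norm_num
        _ ≤ 3 ^ (10:ℕ) := pow_le_pow_left₀ (Real.exp_pos 1).le
            (Real.exp_one_lt_d9.le.trans (by norm_num)) 10
        _ ≤ 100000 := by norm_num
        _ ≤ (m:ℝ) := hm1
    have hlog2 : Real.log 2 ≤ 0.7 := Real.log_two_lt_d9.le.trans (by norm_num)
    have hlf : (m:ℝ) * Real.log m - m ≤ Real.log (m.factorial) := log_factorial_lb m hmpos
    have hlhs_pos : (0:ℝ) < (2:ℝ)^m * (m:ℝ)^k := by positivity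
    have hlog_lt : Real.log ((2:ℝ)^m * (m:ℝ)^k) < 0.41 * Real.log (m.factorial) := by
      rw [Real.log_mul (by positivity) (by positivity), Real.log_pow, Real.log_pow]
      have h1 : (k:ℝ) * Real.log m ≤ ((m:ℝ)/4) * Real.log m :=
        mul_le_mul_of_nonneg_right hkr (by linarith)
      have h2 : (m:ℝ) * Real.log 2 ≤ (m:ℝ) * 0.7 :=
        mul_le_mul_of_nonneg_left hlog2 hmr.le
      have h5 : (m:ℝ) * 10 ≤ (m:ℝ) * Real.log m :=
        mul_le_mul_of_nonneg_left hlogm hmr.le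
      nlinarith [h1, h2, h5, hlf, hmr]
    calc (2:ℝ)^m * (m:ℝ)^k = Real.exp (Real.log ((2:ℝ)^m * (m:ℝ)^k)) :=
          (Real.exp_log hlhs_pos).symm
      _ < Real.exp (0.41 * Real.log (m.factorial)) := Real.exp_lt_exp.mpr hlog_lt
      _ = (m.factorial : ℝ) ^ (0.41 : ℝ) := by
          rw [Real.rpow_def_of_pos hfacpos, mul_comm]
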